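/- If all chores are valued identically at some value w < 0 by all agents and the conflict graph is an interval graph, then for any number n of agents, processing the intervals in increasing order of finish time and always assigning each feasible chore to an agent with the currently fewest chores (skipping chores that conflict with all n bundles) yields a maximal schedule in which any two bundles differ in size by at most one; such a schedule is EF1. -/

import Mathlib

namespace Stmt19

/-- Two distinct intervals conflict iff they overlap. -/
def overlap (m : ℕ) (s f : Fin m → ℤ) (i j : Fin m) : Prop :=
  i ≠ j ∧ s i < f j ∧ s j < f i

def Indep (m : ℕ) (s f : Fin m → ℤ) (S : Finset (Fin m)) : Prop :=
  ∀ i ∈ S, ∀ j ∈ S, ¬ overlap m s f i j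

section Greedy

variable {n m : ℕ} (s f : Fin m → ℤ)

open Classical in
lemma exists_argmin (X : Fin n → Finset (Fin m)) (c : Fin m)
    (h : ∃ i, ∀ x ∈ X i, f x ≤ s c) :
    ∃ a, (∀ x ∈ X a, f x ≤ s c) ∧
      ∀ j, (∀ x ∈ X j, f x ≤ s c) → (X a).card ≤ (X j).card := by
  obtain ⟨a, ha, hmin⟩ := Finset.exists_min_image
    (Finset.univ.filter fun i => ∀ x ∈ X i, f x ≤ s c) (fun i => (X i).card)
    ⟨h.choose, Finset.mem_filter.2 ⟨Finset.mem_univ _, h.choose_spec⟩⟩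
  exact ⟨a, (Finset.mem_filter.1 ha).2,
    fun j hj => hmin j (Finset.mem_filter.2 ⟨Finset.mem_univ _, hj⟩)⟩

open Classical in
noncomputable def step (X : Fin n → Finset (Fin m)) (c : Fin m) :
    Fin n → Finset (Fin m) :=
  if h : ∃ i, ∀ x ∈ X i, f x ≤ s c then
    Function.update X (exists_argmin s f X c h).choose
      (insert c (X (exists_argmin s f X c h).choose))
  else X

lemma step_spec (X : Fin n → Finset (Fin m)) (c : Fin m) :
    (∃ a, (∀ x ∈ X a, f x ≤ s c) ∧
      (∀ j, (∀ x ∈ X j, f x ≤ s c) → (X a).card ≤ (X j).card) ∧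
      step s f X c = Function.update X a (insert c (X a))) ∨
    ((∀ i, ∃ x ∈ X i, s c < f x) ∧ step s f X c = X) := by
  unfold step
  split_ifs with h
  · exact Or.inl ⟨_, (exists_argmin s f X c h).choose_spec.1,
      (exists_argmin s f X c h).choose_spec.2, rfl⟩
  · push_neg at h
    exact Or.inr ⟨h, rfl⟩

noncomputable def runL (X : Fin n → Finset (Fin m)) :
    List (Fin m) → (Fin n → Finset (Fin m))
  | [] => X
  | c :: L => runL (step s f X c) L

lemma subset_step (X : Fin n → Finset (Fin m)) (c : Fin m) (i : Fin n) :
    X i ⊆ step s f X c i := by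
  rcases step_spec s f X c with ⟨a, _, _, heq⟩ | ⟨_, heq⟩
  · rw [heq]
    rcases eq_or_ne i a with h | h
    · rw [h, Function.update_self]
      exact Finset.subset_insert _ _
    · rw [Function.update_of_ne h]
  · rw [heq]

lemma subset_runL (X : Fin n → Finset (Fin m)) (L : List (Fin m)) (i : Fin n) :
    X i ⊆ runL s f X L i := by
  induction L generalizing X with
  | nil => exact subset_rfl
  | cons c L ih => exact (subset_step s f X c i).trans (ih _)

structure Inv (s f : Fin m → ℤ) (X : Fin n → Finset (Fin m)) (L : List (Fin m)) : Prop where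
  disj : ∀ i j, i ≠ j → Disjoint (X i) (X j)
  indep : ∀ i, Indep m s f (X i)
  fresh : ∀ i, ∀ x ∈ X i, x ∉ L
  fmono : ∀ i, ∀ x ∈ X i, ∀ c ∈ L, f x ≤ f c
  spread : ∀ i j, (X i).card ≤ (X j).card + 1
  ordered : ∀ i j, (X i).card < (X j).card → ∀ x ∈ X i, ∃ y ∈ X j, f x ≤ f y

lemma inv_step (X : Fin n → Finset (Fin m)) (c : Fin m) (L : List (Fin m))
    (hsort : ∀ c' ∈ L, f c ≤ f c') (hcL : c ∉ L)
    (hI : Inv s f X (c :: L)) : Inv s f (step s f X c) L := by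
  have hcX : ∀ i, c ∉ X i := fun i hc => hI.fresh i c hc (List.mem_cons_self)
  rcases step_spec s f X c with ⟨a, hav, hmin, heq⟩ | ⟨_, heq⟩
  · -- assigned to a
    have hglob : ∀ j, (X a).card ≤ (X j).card := by
      intro j
      by_cases hj : ∀ x ∈ X j, f x ≤ s c
      · exact hmin j hj
      · push_neg at hj
        obtain ⟨y, hy, hy'⟩ := hj
        by_contra hlt
        push_neg at hlt
        obtain ⟨z, hz, hle⟩ := hI.ordered j a hlt y hy
        exact absurd (le_trans hle (hav z hz)) (not_le.2 hy')
    have hXa : step s f X c a = insert c (X a) := by rw [heq, Function.update_self]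
    have hXj : ∀ j, j ≠ a → step s f X c j = X j := fun j hj => by
      rw [heq, Function.update_of_ne hj]
    have hcarda : (step s f X c a).card = (X a).card + 1 := by
      rw [hXa, Finset.card_insert_of_notMem (hcX a)]
    have hmemcases : ∀ {i : Fin n} {x : Fin m}, x ∈ step s f X c i →
        x ∈ X i ∨ (i = a ∧ x = c) := by
      intro i x hx
      rcases eq_or_ne i a with hia | hia
      · rw [hia, hXa, Finset.mem_insert] at hx
        rcases hx with hxc | hx
        · exact Or.inr ⟨hia, hxc⟩
        · exact Or.inl (hia ▸ hx)
      · rw [hXj i hia] at hx; exact Or.inl hx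
    refine ⟨?_, ?_, ?_, ?_, ?_, ?_⟩
    · -- disjoint
      intro i j hij
      rw [Finset.disjoint_left]
      intro x hxi hxj
      rcases hmemcases hxi with hxi' | ⟨hia, hxc⟩
      · rcases hmemcases hxj with hxj' | ⟨hja, hxc⟩
        · exact (Finset.disjoint_left.1 (hI.disj i j hij)) hxi' hxj'
        · exact hcX i (hxc ▸ hxi')
      · rcases hmemcases hxj with hxj' | ⟨hja, hxc'⟩
        · exact hcX j (hxc ▸ hxj')
        · exact hij (hia.trans hja.symm)
    · -- indep
      intro i x hx y hy hov
      rcases hmemcases hx with hx' | ⟨hia, hxc⟩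
      · rcases hmemcases hy with hy' | ⟨hia', hyc⟩
        · exact hI.indep i x hx' y hy' hov
        · have h1 : f x ≤ s c := hav x (hia' ▸ hx')
          have h2 : s c < f x := hyc ▸ hov.2.2
          exact absurd h1 (not_le.2 h2)
      · rcases hmemcases hy with hy' | ⟨hia', hyc⟩
        · have h1 : f y ≤ s c := hav y (hia ▸ hy')
          have h2 : s c < f y := hxc ▸ hov.2.1
          exact absurd h1 (not_le.2 h2)
        · exact hov.1 (hxc.trans hyc.symm)
    · -- fresh
      intro i x hx hxL
      rcases hmemcases hx with hx' | ⟨_, hxc⟩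
      · exact hI.fresh i x hx' (List.mem_cons_of_mem _ hxL)
      · exact hcL (hxc ▸ hxL)
    · -- fmono
      intro i x hx c' hc'
      rcases hmemcases hx with hx' | ⟨_, hxc⟩
      · exact hI.fmono i x hx' c' (List.mem_cons_of_mem _ hc')
      · rw [hxc]; exact hsort c' hc'
    · -- spread
      intro i j
      rcases eq_or_ne i a with hia | hia
      · rcases eq_or_ne j a with hja | hja
        · rw [hia, hja]; exact Nat.le_succ _
        · rw [hia, hcarda, hXj j hja]
          exact Nat.add_le_add_right (hglob j) 1
      · rw [hXj i hia]
        rcases eq_or_ne j a with hja | hja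
        · rw [hja, hcarda]
          exact le_trans (hI.spread i a) (Nat.le_succ _)
        · rw [hXj j hja]; exact hI.spread i j
    · -- ordered
      intro i j hcard x hx
      rcases eq_or_ne j a with hja | hja
      · refine ⟨c, ?_, ?_⟩
        · rw [hja, hXa]; exact Finset.mem_insert_self _ _
        · rcases hmemcases hx with hx' | ⟨_, hxc⟩
          · exact hI.fmono i x hx' c (List.mem_cons_self)
          · rw [hxc]
      · rcases eq_or_ne i a with hia | hia
        · rw [hia, hcarda, hXj j hja] at hcard
          exact absurd (lt_of_le_of_lt (hI.spread j a) hcard) (lt_irrefl _)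
        · rw [hXj i hia, hXj j hja] at hcard
          rw [hXj i hia] at hx
          obtain ⟨y, hy, hle⟩ := hI.ordered i j hcard x hx
          refine ⟨y, ?_, hle⟩
          rw [hXj j hja]; exact hy
  · rw [heq]
    exact ⟨hI.disj, hI.indep,
      fun i x hx hxL => hI.fresh i x hx (List.mem_cons_of_mem _ hxL),
      fun i x hx c' hc' => hI.fmono i x hx c' (List.mem_cons_of_mem _ hc'),
      hI.spread, hI.ordered⟩

lemma run_good (hsf : ∀ i, s i < f i) :
    ∀ (L : List (Fin m)) (X : Fin n → Finset (Fin m)),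
    L.Pairwise (fun a b => f a ≤ f b) → L.Nodup → Inv s f X L →
    Inv s f (runL s f X L) [] ∧
      (∀ c ∈ L, (∀ i, c ∉ runL s f X L i) →
        ∀ i, ∃ x ∈ runL s f X L i, overlap m s f c x) := by
  intro L
  induction L with
  | nil => exact fun X _ _ hI => ⟨hI, fun c hc => absurd hc List.not_mem_nil⟩
  | cons c L ih =>
    intro X hp hnd hI
    have hsort : ∀ c' ∈ L, f c ≤ f c' := fun c' hc' => (List.pairwise_cons.1 hp).1 c' hc'
    have hcL : c ∉ L := (List.nodup_cons.1 hnd).1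
    have hI' : Inv s f (step s f X c) L := inv_step s f X c L hsort hcL hI
    have hrun : runL s f X (c :: L) = runL s f (step s f X c) L := rfl
    obtain ⟨hInv, hmax⟩ := ih (step s f X c) (List.pairwise_cons.1 hp).2
      (List.nodup_cons.1 hnd).2 hI'
    rw [hrun]
    refine ⟨hInv, ?_⟩
    intro c' hc' hnot i
    rcases List.mem_cons.1 hc' with hcc | hc'L
    · -- head chore: it was either assigned or skipped
      subst hcc
      rcases step_spec s f X c' with ⟨a, _, _, heq⟩ | ⟨hskip, heq⟩
      · exfalso
        apply hnot a
        apply subset_runL s f (step s f X c') L a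
        rw [heq, Function.update_self]
        exact Finset.mem_insert_self _ _
      · have hstep : runL s f (step s f X c') L = runL s f X L := by rw [heq]
        rw [hstep]
        obtain ⟨y, hy, hlt⟩ := hskip i
        refine ⟨y, subset_runL s f X L i hy, ?_, hlt, ?_⟩
        · exact fun hcy => hI.fresh i y hy (by rw [← hcy]; exact List.mem_cons_self)
        · calc s y < f y := hsf y
            _ ≤ f c' := hI.fmono i y hy c' (List.mem_cons_self)
    · exact hmax c' hc'L hnot i

end Greedy

lemma EF1_of_balanced {n m : ℕ} (w : ℤ) (hw : w < 0)
    (X : Fin n → Finset (Fin m))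
    (hbal : ∀ i j, (X i).card ≤ (X j).card + 1) :
    ∀ i j, (X i).Nonempty →
      ∃ c ∈ X i, w * (((X i).erase c).card : ℤ) ≥ w * ((X j).card : ℤ) := by
  intro i j hne
  obtain ⟨c, hc⟩ := hne
  refine ⟨c, hc, ?_⟩
  have h1 : ((X i).erase c).card = (X i).card - 1 := Finset.card_erase_of_mem hc
  have hpos : 1 ≤ (X i).card := Finset.card_pos.2 ⟨c, hc⟩
  have hb := hbal i j
  have h2 : ((X i).erase c).card ≤ (X j).card := by omega
  exact mul_le_mul_of_nonpos_left (by exact_mod_cast h2) hw.le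

theorem balanced_maximal_EF1_identical_values (n m : ℕ)
    (w : ℤ) (hw : w < 0)
    (s f : Fin m → ℤ) (hsf : ∀ i, s i < f i) :
    -- the greedy balanced procedure yields a maximal schedule whose bundle
    -- sizes pairwise differ by at most one, and which is EF1
    (∃ X : Fin n → Finset (Fin m),
      (∀ i j, i ≠ j → Disjoint (X i) (X j)) ∧
      (∀ i, Indep m s f (X i)) ∧
      -- maximal
      (∀ c : Fin m, (∀ i, c ∉ X i) → ∀ i, ¬ Indep m s f (insert c (X i))) ∧
      -- balanced: any two bundles differ in size by at most one
      (∀ i j, (X i).card ≤ (X j).card + 1) ∧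
      -- EF1 (valuation of a bundle S is w * |S|)
      (∀ i j, (X i).Nonempty →
        ∃ c ∈ X i, w * (((X i).erase c).card : ℤ) ≥ w * ((X j).card : ℤ))) ∧
    -- moreover, any balanced feasible schedule is EF1
    (∀ X : Fin n → Finset (Fin m),
      (∀ i j, i ≠ j → Disjoint (X i) (X j)) →
      (∀ i, Indep m s f (X i)) →
      (∀ i j, (X i).card ≤ (X j).card + 1) →
      (∀ i j, (X i).Nonempty →
        ∃ c ∈ X i, w * (((X i).erase c).card : ℤ) ≥ w * ((X j).card : ℤ))) := by
  classical
  refine ⟨?_, fun X _ _ hbal => EF1_of_balanced w hw X hbal⟩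
  -- construct the greedy schedule
  have hmsL := List.mergeSort_perm (List.finRange m) (fun a b => decide (f a ≤ f b))
  set L := (List.finRange m).mergeSort (fun a b => decide (f a ≤ f b)) with hL
  have hperm : List.Perm L (List.finRange m) := hmsL
  have hnd : L.Nodup := hperm.nodup_iff.2 (List.nodup_finRange m)
  have hmem : ∀ c : Fin m, c ∈ L := fun c => hperm.mem_iff.2 (List.mem_finRange c)
  have hsorted : L.Pairwise (fun a b => f a ≤ f b) := by
    have hs := List.pairwise_mergeSort
      (le := fun a b : Fin m => decide (f a ≤ f b))
      (fun a b c h₁ h₂ => by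
        simp only [decide_eq_true_eq] at *; exact le_trans h₁ h₂)
      (fun a b => by simpa using le_total (f a) (f b))
      (List.finRange m)
    rw [← hL] at hs
    refine List.Pairwise.imp ?_ hs
    intro a b h
    simpa using h
  have hI0 : Inv s f (fun _ : Fin n => (∅ : Finset (Fin m))) L := by
    refine ⟨?_, ?_, ?_, ?_, ?_, ?_⟩ <;> simp [Indep]
  obtain ⟨hInv, hmax⟩ := run_good s f hsf L (fun _ => ∅) hsorted hnd hI0
  refine ⟨runL s f (fun _ => ∅) L, hInv.disj, hInv.indep, ?_, hInv.spread,
    EF1_of_balanced w hw _ hInv.spread⟩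
  intro c hc i hind
  obtain ⟨x, hx, hov⟩ := hmax c (hmem c) hc i
  exact hind c (Finset.mem_insert_self _ _) x (Finset.mem_insert_of_mem hx) hov

end Stmt19
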